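/- Let X be a connected n-dimensional simplicial complex that is n-essential as a topological space (its classifying map f : X → K(π₁(X), 1) cannot be deformed into the (n−1)-skeleton of K(π₁(X), 1)). Then X is combinatorially n-essential: its vertex set cannot be partitioned into n or fewer inessential sets. -/

import Mathlib

/-- An abstract simplicial complex on vertex type `V`: a downward-closed family of
nonempty finite sets of vertices containing all singletons. -/
structure SComplex (V : Type) where
  faces : Set (Finset V)
  nonempty_of_mem : ∀ s ∈ faces, s.Nonempty
  down_closed : ∀ s ∈ faces, ∀ t ⊆ s, t.Nonempty → t ∈ faces
  singleton_mem : ∀ v : V, {v} ∈ faces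

variable {V : Type} [DecidableEq V]

/-- The 1-skeleton of a simplicial complex, as a simple graph on the vertices. -/
def SComplex.graph (X : SComplex V) : SimpleGraph V where
  Adj u v := u ≠ v ∧ ({u, v} : Finset V) ∈ X.faces
  symm := ⟨fun u v h => ⟨h.1.symm, Finset.pair_comm u v ▸ h.2⟩⟩
  loopless := ⟨fun v h => h.1 rfl⟩

/-- Combinatorial (edge-path) homotopy rel endpoints between edge-walks in a simplicial
complex: the equivalence generated by removing backtracks and by replacing two sides
of a 2-face by the third side.  Two walks are edge-homotopic iff the corresponding
paths in the geometric realization are homotopic rel endpoints. -/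
inductive SComplex.EdgeHomotopic (X : SComplex V) :
    ∀ {u v : V}, X.graph.Walk u v → X.graph.Walk u v → Prop
  | refl {u v : V} (p : X.graph.Walk u v) : EdgeHomotopic X p p
  | symm {u v : V} {p q : X.graph.Walk u v} : EdgeHomotopic X p q → EdgeHomotopic X q p
  | trans {u v : V} {p q r : X.graph.Walk u v} :
      EdgeHomotopic X p q → EdgeHomotopic X q r → EdgeHomotopic X p r
  | cons {u v w : V} (h : X.graph.Adj u v) {p q : X.graph.Walk v w} :
      EdgeHomotopic X p q →
      EdgeHomotopic X (SimpleGraph.Walk.cons h p) (SimpleGraph.Walk.cons h q)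
  | backtrack {u v w : V} (h : X.graph.Adj u v) (p : X.graph.Walk u w) :
      EdgeHomotopic X (SimpleGraph.Walk.cons h (SimpleGraph.Walk.cons h.symm p)) p
  | triangle {u v w z : V} (huv : X.graph.Adj u v) (hvw : X.graph.Adj v w)
      (huw : X.graph.Adj u w) (hface : ({u, v, w} : Finset V) ∈ X.faces)
      (p : X.graph.Walk w z) :
      EdgeHomotopic X (SimpleGraph.Walk.cons huv (SimpleGraph.Walk.cons hvw p))
        (SimpleGraph.Walk.cons huw p)

/-- A closed edge-path is null-homotopic if it is edge-homotopic to the constant path. -/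
def SComplex.NullHomotopic (X : SComplex V) {x : V} (p : X.graph.Walk x x) : Prop :=
  X.EdgeHomotopic p SimpleGraph.Walk.nil

/-- The edge-path systole: the least length of a closed edge-path that is not
null-homotopic (so every closed edge-path of length `< sys X` is null-homotopic,
and `sys X` is the largest such integer); it is `+∞` if every closed edge-path
is null-homotopic (e.g. if `X` is simply connected). -/
noncomputable def SComplex.sys (X : SComplex V) : ℕ∞ :=
  sInf {n : ℕ∞ | ∃ (x : V) (p : X.graph.Walk x x), ¬ X.NullHomotopic p ∧ (p.length : ℕ∞) = n}

/-- A set `Y` of vertices is inessential if every closed edge-path all of whose vertices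
lie in `Y` (equivalently, every loop in a connected component of the induced subcomplex
`⟨Y⟩`) is null-homotopic in `X`;  this says exactly that for every connected component
`C` of `⟨Y⟩` and every connected component `D` of `X` the map `π₁(C) → π₁(D)` is trivial. -/
def SComplex.Inessential (X : SComplex V) (Y : Set V) : Prop :=
  ∀ (x : V) (p : X.graph.Walk x x), (∀ v ∈ p.support, v ∈ Y) → X.NullHomotopic p

/-- `X` is combinatorially `n`-essential if its vertex set cannot be partitioned into
`n` or fewer inessential sets. -/
def SComplex.CombEssential (X : SComplex V) (n : ℕ) : Prop :=
  ¬ ∃ P : Fin n → Set V, (∀ v, ∃ i, v ∈ P i) ∧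
      (∀ i j, i ≠ j → Disjoint (P i) (P j)) ∧ ∀ i, X.Inessential (P i)

/-- The combinatorial metric ball `B(x,i)`: vertices at edge-distance at most `i` from `x`. -/
def SComplex.ball (X : SComplex V) (x : V) (i : ℕ) : Set V :=
  {y | ∃ p : X.graph.Walk x y, p.length ≤ i}

/-- `r` is the homotopy triviality radius of `X`: every ball of radius `r` is
inessential, and `r` is the largest integer with this property. -/
def SComplex.HomotopyTrivRadius (X : SComplex V) (r : ℕ) : Prop :=
  (∀ x, X.Inessential (X.ball x r)) ∧
    ∀ r' : ℕ, (∀ x, X.Inessential (X.ball x r')) → r' ≤ r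

/-- The geometric realization of a finite simplicial complex: the set of probability
weightings of the vertices whose support spans a face, topologized as a subspace of
`V → ℝ`. -/
def SComplex.realization [Fintype V] (X : SComplex V) : Set (V → ℝ) :=
  {f | (∀ v, 0 ≤ f v) ∧ (∑ v, f v = 1) ∧ ∃ s ∈ X.faces, ∀ v, f v ≠ 0 → v ∈ s}

/-- An open subset `U` of a space `T` is inessential if for every connected component
`C` of `U` and every connected component `D` of `T` the map `π₁(C) → π₁(D)` is trivial;
for locally path-connected `T` (such as the realization of a simplicial complex) this
says exactly that every loop contained in `U` is null-homotopic in `T`. -/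
def TopInessential {T : Type} [TopologicalSpace T] (U : Set T) : Prop :=
  ∀ (y : T) (γ : Path y y), Set.range ⇑γ ⊆ U → γ.Homotopic (Path.refl y)

namespace SCProof

variable {V : Type} [Fintype V] [DecidableEq V] (X : SComplex V)

def vertFun (v : V) : V → ℝ := fun w => if w = v then 1 else 0

lemma vertFun_mem (v : V) : vertFun v ∈ X.realization := by
  refine ⟨fun w => by by_cases h : w = v <;> simp [vertFun, h], by simp [vertFun],
    {v}, X.singleton_mem v, fun w hw => ?_⟩
  by_contra hwv
  simp only [Finset.mem_singleton] at hwv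
  exact hw (by simp [vertFun, hwv])

def vertPt (v : V) : ↥X.realization := ⟨vertFun v, vertFun_mem X v⟩

lemma vertFun_self (v : V) : vertFun v v = 1 := by simp [vertFun]

lemma vertFun_supp {v w : V} (h : vertFun v w ≠ 0) : w = v := by
  by_contra hc; exact h (by simp [vertFun, hc])

lemma comb_mem {f g : V → ℝ} {s : Finset V} (hs : s ∈ X.faces)
    (hf : f ∈ X.realization) (hg : g ∈ X.realization)
    (hfs : ∀ v, f v ≠ 0 → v ∈ s) (hgs : ∀ v, g v ≠ 0 → v ∈ s)
    {t : ℝ} (h0 : 0 ≤ t) (h1 : t ≤ 1) :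
    ((1 - t) • f + t • g) ∈ X.realization ∧ ∀ v, ((1 - t) • f + t • g) v ≠ 0 → v ∈ s := by
  obtain ⟨hf0, hf1, _⟩ := hf
  obtain ⟨hg0, hg1, _⟩ := hg
  have hsupp : ∀ v, ((1 - t) • f + t • g) v ≠ 0 → v ∈ s := by
    intro v hv
    by_contra hvs
    have h1' : f v = 0 := by by_contra h; exact hvs (hfs v h)
    have h2' : g v = 0 := by by_contra h; exact hvs (hgs v h)
    exact hv (by simp [h1', h2'])
  refine ⟨⟨fun v => ?_, ?_, s, hs, hsupp⟩, hsupp⟩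
  · simp only [Pi.add_apply, Pi.smul_apply, smul_eq_mul]
    have := hf0 v; have := hg0 v; nlinarith
  · simp only [Pi.add_apply, Pi.smul_apply, smul_eq_mul]
    rw [Finset.sum_add_distrib, ← Finset.mul_sum, ← Finset.mul_sum, hf1, hg1]; ring

def straightPath (f g : ↥X.realization)
    (h : ∀ t : ℝ, 0 ≤ t → t ≤ 1 →
      ((1 - t) • (f : V → ℝ) + t • (g : V → ℝ)) ∈ X.realization) : Path f g where
  toFun := fun t => ⟨(1 - (t : ℝ)) • (f : V → ℝ) + (t : ℝ) • (g : V → ℝ), h t t.2.1 t.2.2⟩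
  continuous_toFun := by
    apply Continuous.subtype_mk
    fun_prop
  source' := by
    apply Subtype.ext; simp
  target' := by
    apply Subtype.ext; simp

@[simp] lemma straightPath_apply (f g : ↥X.realization) (h) (t : unitInterval) :
    ((straightPath X f g h t : ↥X.realization) : V → ℝ)
      = (1 - (t : ℝ)) • (f : V → ℝ) + (t : ℝ) • (g : V → ℝ) := rfl

lemma straightPath_self (f : ↥X.realization) (h) :
    straightPath X f f h = Path.refl f := by
  ext t x
  show ((1 - (t:ℝ)) • (f : V → ℝ) + (t:ℝ) • (f : V → ℝ)) x = (f : V → ℝ) x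
  rw [← add_smul]; simp

/-- Paths lying in a subset of the realization which is star-shaped with respect to a
point `z0` (in a strong sense) are homotopic rel endpoints. -/
lemma starHomotopic (A : Set (V → ℝ)) (hA : A ⊆ X.realization) (z0 : V → ℝ) (hz0 : z0 ∈ A)
    (hcomb : ∀ f ∈ A, ∀ t : ℝ, 0 ≤ t → t ≤ 1 → (1 - t) • f + t • z0 ∈ A)
    {x y : ↥X.realization} (p q : Path x y)
    (hp : ∀ t, ((p t : ↥X.realization) : V → ℝ) ∈ A)
    (hq : ∀ t, ((q t : ↥X.realization) : V → ℝ) ∈ A) :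
    p.Homotopic q := by
  set SA : Set ↥X.realization := {z | (z : V → ℝ) ∈ A} with hSA
  have hcont : Continuous fun sz : unitInterval × ↥SA =>
      ((1 - (sz.1 : ℝ)) • (((sz.2 : ↥X.realization) : V → ℝ)) + (sz.1 : ℝ) • z0) := by
    fun_prop
  haveI : ContractibleSpace ↥SA := by
    rw [contractible_iff_id_nullhomotopic]
    refine ⟨⟨⟨z0, hA hz0⟩, hz0⟩, ⟨⟨⟨fun sz =>
      ⟨⟨(1 - (sz.1 : ℝ)) • (((sz.2 : ↥X.realization) : V → ℝ)) + (sz.1 : ℝ) • z0,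
        hA (hcomb _ sz.2.2 _ sz.1.2.1 sz.1.2.2)⟩,
        hcomb _ sz.2.2 _ sz.1.2.1 sz.1.2.2⟩,
      (hcont.subtype_mk _).subtype_mk _⟩, fun z => ?_, fun z => ?_⟩⟩⟩
    · apply Subtype.ext; apply Subtype.ext; simp
    · apply Subtype.ext; apply Subtype.ext; simp
  have hx : x ∈ SA := by have := hp 0; rwa [p.source] at this
  have hy : y ∈ SA := by have := hp 1; rwa [p.target] at this
  let p' : Path (⟨x, hx⟩ : ↥SA) ⟨y, hy⟩ :=
    ⟨⟨fun t => ⟨p t, hp t⟩, p.continuous.subtype_mk _⟩,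
      Subtype.ext p.source, Subtype.ext p.target⟩
  let q' : Path (⟨x, hx⟩ : ↥SA) ⟨y, hy⟩ :=
    ⟨⟨fun t => ⟨q t, hq t⟩, q.continuous.subtype_mk _⟩,
      Subtype.ext q.source, Subtype.ext q.target⟩
  have h' : p'.Homotopic q' := SimplyConnectedSpace.paths_homotopic p' q'
  have hmap := h'.map ⟨_, continuous_subtype_val (p := SA)⟩
  have hpe : p'.map continuous_subtype_val = p := by ext t; rfl
  have hqe : q'.map continuous_subtype_val = q := by ext t; rfl
  rwa [hpe, hqe] at hmap


open CategoryTheory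

attribute [local instance] Path.Homotopic.setoid

def FGo (z : ↥X.realization) : FundamentalGroupoid ↥X.realization := ⟨z⟩

def FGm {x y : ↥X.realization} (p : Path x y) : FGo X x ⟶ FGo X y := ⟦p⟧

lemma FGm_trans {x y z : ↥X.realization} (p : Path x y) (q : Path y z) :
    FGm X (p.trans q) = FGm X p ≫ FGm X q := rfl

lemma FGm_refl (x : ↥X.realization) : FGm X (Path.refl x) = 𝟙 (FGo X x) := rfl

lemma FGm_eq_of_homotopic {x y : ↥X.realization} {p q : Path x y} (h : p.Homotopic q) :
    FGm X p = FGm X q := Quotient.sound h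

lemma homotopic_of_FGm_eq {x y : ↥X.realization} {p q : Path x y} (h : FGm X p = FGm X q) :
    p.Homotopic q := Quotient.exact h

def Aset (s : Finset V) : Set (V → ℝ) := {f | f ∈ X.realization ∧ ∀ w, f w ≠ 0 → w ∈ s}

lemma Aset_sub (s : Finset V) : Aset X s ⊆ X.realization := fun _ h => h.1

lemma vert_supp_sub {s : Finset V} {u : V} (hu : u ∈ s) :
    ∀ w, vertFun u w ≠ 0 → w ∈ s := fun w hw => (vertFun_supp hw) ▸ hu

lemma vert_mem_Aset {s : Finset V} {u : V} (hu : u ∈ s) : vertFun u ∈ Aset X s :=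
  ⟨vertFun_mem X u, vert_supp_sub hu⟩

lemma Aset_comb {s : Finset V} (hs : s ∈ X.faces) {u : V} (hu : u ∈ s) :
    ∀ f ∈ Aset X s, ∀ t : ℝ, 0 ≤ t → t ≤ 1 → (1 - t) • f + t • vertFun u ∈ Aset X s := by
  intro f hf t h0 h1
  obtain ⟨m1, m2⟩ := comb_mem X hs hf.1 (vertFun_mem X u) hf.2 (vert_supp_sub hu) h0 h1
  exact ⟨m1, m2⟩

lemma straight_mem_of_face {s : Finset V} (hs : s ∈ X.faces) {f g : ↥X.realization}
    (hf : ∀ w, (f : V → ℝ) w ≠ 0 → w ∈ s) (hg : ∀ w, (g : V → ℝ) w ≠ 0 → w ∈ s) :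
    ∀ t : ℝ, 0 ≤ t → t ≤ 1 →
      ((1 - t) • (f : V → ℝ) + t • (g : V → ℝ)) ∈ X.realization :=
  fun t h0 h1 => (comb_mem X hs f.2 g.2 hf hg h0 h1).1

lemma straight_in_Aset {s : Finset V} (hs : s ∈ X.faces) {f g : ↥X.realization}
    (hf : ∀ w, (f : V → ℝ) w ≠ 0 → w ∈ s) (hg : ∀ w, (g : V → ℝ) w ≠ 0 → w ∈ s)
    (hmem) (t : unitInterval) :
    ((straightPath X f g hmem t : ↥X.realization) : V → ℝ) ∈ Aset X s := by
  rw [straightPath_apply]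
  obtain ⟨m1, m2⟩ := comb_mem X hs f.2 g.2 hf hg t.2.1 t.2.2
  exact ⟨m1, m2⟩

lemma forall_trans_mem {A : Set (V → ℝ)} {x y z : ↥X.realization}
    {p : Path x y} {q : Path y z}
    (hp : ∀ t, ((p t : ↥X.realization) : V → ℝ) ∈ A)
    (hq : ∀ t, ((q t : ↥X.realization) : V → ℝ) ∈ A) :
    ∀ t, (((p.trans q) t : ↥X.realization) : V → ℝ) ∈ A := by
  intro t
  rw [Path.trans_apply]
  split_ifs with h
  · exact hp _
  · exact hq _

lemma vertPt_supp {s : Finset V} {u : V} (hu : u ∈ s) :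
    ∀ w, ((vertPt X u : ↥X.realization) : V → ℝ) w ≠ 0 → w ∈ s := vert_supp_sub hu

def seg {u v : V} (h : X.graph.Adj u v) : Path (vertPt X u) (vertPt X v) :=
  straightPath X _ _ (straight_mem_of_face X (h : u ≠ v ∧ ({u, v} : Finset V) ∈ X.faces).2
    (vertPt_supp X (Finset.mem_insert_self u {v}))
    (vertPt_supp X (Finset.mem_insert_of_mem (Finset.mem_singleton_self v))))

noncomputable def wpath {u v : V} (w : X.graph.Walk u v) : Path (vertPt X u) (vertPt X v) :=
  SimpleGraph.Walk.rec (motive := fun a b _ => Path (vertPt X a) (vertPt X b))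
    (fun {u} => Path.refl (vertPt X u)) (fun h _ ih => (seg X h).trans ih) w

@[simp] lemma wpath_nil {u : V} : wpath X (.nil : X.graph.Walk u u) = Path.refl _ := rfl

@[simp] lemma wpath_cons {u v w : V} (h : X.graph.Adj u v) (p : X.graph.Walk v w) :
    wpath X (.cons h p) = (seg X h).trans (wpath X p) := rfl

lemma wpath_concat {u x y : V} (w : X.graph.Walk u x) (h : X.graph.Adj x y) :
    FGm X (wpath X (w.concat h)) = FGm X (wpath X w) ≫ FGm X (seg X h) := by
  induction w with
  | nil =>
    simp only [SimpleGraph.Walk.concat_nil, wpath_cons, wpath_nil, FGm_trans, FGm_refl,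
      Category.comp_id, Category.id_comp]
  | cons h' w ih =>
    rw [SimpleGraph.Walk.concat_cons, wpath_cons, wpath_cons, FGm_trans, FGm_trans, ih,
      Category.assoc]

/-- two sides of a 2-face compose to the third, in the fundamental groupoid. -/
lemma seg_comp_seg {u v w : V} (huv : X.graph.Adj u v) (hvw : X.graph.Adj v w)
    (huw : X.graph.Adj u w) (hface : ({u, v, w} : Finset V) ∈ X.faces) :
    FGm X (seg X huv) ≫ FGm X (seg X hvw) = FGm X (seg X huw) := by
  rw [← FGm_trans]
  apply FGm_eq_of_homotopic
  have hu : u ∈ ({u, v, w} : Finset V) := by simp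
  have hv : v ∈ ({u, v, w} : Finset V) := by simp
  have hw : w ∈ ({u, v, w} : Finset V) := by simp
  apply starHomotopic X (Aset X ({u, v, w} : Finset V)) (Aset_sub X _) (vertFun u)
    (vert_mem_Aset X hu) (Aset_comb X hface hu)
  · exact forall_trans_mem X
      (straight_in_Aset X hface (vertPt_supp X hu) (vertPt_supp X hv) _)
      (straight_in_Aset X hface (vertPt_supp X hv) (vertPt_supp X hw) _)
  · exact straight_in_Aset X hface (vertPt_supp X hu) (vertPt_supp X hw) _

lemma seg_comp_symm {u v : V} (h : X.graph.Adj u v) :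
    FGm X (seg X h) ≫ FGm X (seg X h.symm) = 𝟙 (FGo X (vertPt X u)) := by
  rw [← FGm_trans, ← FGm_refl]
  apply FGm_eq_of_homotopic
  have hu : u ∈ ({u, v} : Finset V) := by simp
  have hv : v ∈ ({u, v} : Finset V) := by simp
  apply starHomotopic X (Aset X ({u, v} : Finset V)) (Aset_sub X _) (vertFun u)
    (vert_mem_Aset X hu) (Aset_comb X (h : u ≠ v ∧ ({u, v} : Finset V) ∈ X.faces).2 hu)
  · exact forall_trans_mem X
      (straight_in_Aset X (h : u ≠ v ∧ ({u, v} : Finset V) ∈ X.faces).2 (vertPt_supp X hu) (vertPt_supp X hv) _)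
      (straight_in_Aset X (h : u ≠ v ∧ ({u, v} : Finset V) ∈ X.faces).2 (vertPt_supp X hv) (vertPt_supp X hu) _)
  · intro t
    show ((vertPt X u : ↥X.realization) : V → ℝ) ∈ _
    exact (vert_mem_Aset X hu)

lemma wpath_eq_of_edgeHomotopic {u v : V} {p q : X.graph.Walk u v}
    (h : X.EdgeHomotopic p q) : FGm X (wpath X p) = FGm X (wpath X q) := by
  induction h with
  | refl _ => rfl
  | symm _ ih => exact ih.symm
  | trans _ _ ih₁ ih₂ => exact ih₁.trans ih₂
  | cons h _ ih =>
    rw [wpath_cons, wpath_cons, FGm_trans, FGm_trans, ih]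
  | backtrack h p =>
    rw [wpath_cons, wpath_cons, FGm_trans, FGm_trans, ← Category.assoc, seg_comp_symm,
      Category.id_comp]
  | triangle huv hvw huw hface p =>
    rw [wpath_cons, wpath_cons, wpath_cons, FGm_trans, FGm_trans, FGm_trans, ← Category.assoc,
      seg_comp_seg X huv hvw huw hface]


section SubPath

variable {T : Type*} [TopologicalSpace T] {x y : T}

/-- The restriction of a path to `[a,b]`, using the clamped extension. -/
noncomputable def subPath (γ : Path x y) (a b : ℝ) : Path (γ.extend a) (γ.extend b) where
  toFun := fun t => γ.extend ((1 - (t : ℝ)) * a + (t : ℝ) * b)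
  continuous_toFun := by
    apply γ.continuous_extend.comp
    fun_prop
  source' := by norm_num
  target' := by norm_num

@[simp] lemma subPath_apply (γ : Path x y) (a b : ℝ) (t : unitInterval) :
    subPath γ a b t = γ.extend ((1 - (t : ℝ)) * a + (t : ℝ) * b) := rfl

lemma subPath_self (γ : Path x y) (a : ℝ) :
    subPath γ a a = Path.refl (γ.extend a) := by
  ext t
  show γ.extend ((1 - (t : ℝ)) * a + (t : ℝ) * a) = γ.extend a
  congr 1; ring

lemma subPath_trans_homotopic (γ : Path x y) {a b c : ℝ} (hab : a ≤ b) (hbc : b ≤ c) :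
    ((subPath γ a b).trans (subPath γ b c)).Homotopic (subPath γ a c) := by
  rcases eq_or_lt_of_le (hab.trans hbc) with hac | hac
  · -- degenerate case `a = c`, so `a = b = c`.
    obtain rfl : a = b := le_antisymm hab (by rw [hac]; exact hbc)
    obtain rfl : a = c := hac
    rw [subPath_self]
    rw [Path.refl_trans_refl]
  · -- the interesting case `a < c`.
    have hca : c - a ≠ 0 := by linarith
    set ψ : ℝ → ℝ := fun t =>
      if t ≤ 1 / 2 then 2 * t * (b - a) / (c - a)
      else (b - a + (2 * t - 1) * (c - b)) / (c - a) with hψ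
    have hψc : Continuous ψ := by
      apply Continuous.if_le (by fun_prop) (by fun_prop) continuous_id continuous_const
      intro t ht
      simp only [id_eq] at ht
      subst ht; norm_num
    have hψmem : ∀ t : unitInterval, ψ t ∈ Set.Icc (0 : ℝ) 1 := by
      intro t
      obtain ⟨ht0, ht1⟩ := t.2
      simp only [hψ]
      split_ifs with h
      · constructor
        · exact div_nonneg (by nlinarith) (by linarith)
        · rw [div_le_one (by linarith)]
          nlinarith
      · push_neg at h
        constructor
        · exact div_nonneg (by nlinarith) (by linarith)
        · rw [div_le_one (by linarith)]
          nlinarith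
    set φ : unitInterval → unitInterval :=
      fun t => Set.projIcc 0 1 zero_le_one (ψ t) with hφ
    have hφc : Continuous φ := continuous_projIcc.comp (hψc.comp continuous_subtype_val)
    have hφcoe : ∀ t : unitInterval, ((φ t : ℝ)) = ψ t := by
      intro t
      show ((Set.projIcc 0 1 zero_le_one (ψ t) : unitInterval) : ℝ) = ψ t
      rw [Set.projIcc_of_mem zero_le_one (hψmem t)]
    have hφ0 : φ 0 = 0 := by
      apply Subtype.ext
      rw [hφcoe]
      show ψ ((0 : unitInterval) : ℝ) = 0
      rw [hψ]; norm_num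
    have hφ1 : φ 1 = 1 := by
      apply Subtype.ext
      rw [hφcoe]
      show ψ ((1 : unitInterval) : ℝ) = 1
      rw [hψ]
      norm_num
      exact hca
    have hrep : (subPath γ a b).trans (subPath γ b c)
        = (subPath γ a c).reparam φ hφc hφ0 hφ1 := by
      ext t
      rw [Path.trans_apply]
      show _ = γ.extend ((1 - ((φ t) : ℝ)) * a + ((φ t) : ℝ) * c)
      rw [hφcoe]
      split_ifs with h
      · show γ.extend _ = _
        congr 1
        rw [hψ]
        simp only [if_pos h]
        field_simp
        ring
      · show γ.extend _ = _
        congr 1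
        rw [hψ]
        simp only [if_neg h]
        field_simp
        ring
    rw [hrep]
    exact Path.Homotopic.symm ⟨Path.Homotopy.reparam (subPath γ a c) φ hφc hφ0 hφ1⟩

lemma homotopic_transfer {x' y' : T} (hx : x = x') (hy : y = y')
    {p q : Path x y} {p' q' : Path x' y'} (hp : ∀ t, p t = p' t) (hq : ∀ t, q t = q' t)
    (h : p.Homotopic q) : p'.Homotopic q' := by
  subst hx; subst hy
  have hpe : p = p' := by ext t; exact hp t
  have hqe : q = q' := by ext t; exact hq t
  rwa [hpe, hqe] at h

lemma subPath_exists_eq (γ : Path x y) {a b : ℝ} (h0 : 0 ≤ a) (hab : a ≤ b) (hb1 : b ≤ 1)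
    (t : unitInterval) :
    ∃ u : unitInterval, a ≤ (u : ℝ) ∧ (u : ℝ) ≤ b ∧ subPath γ a b t = γ u := by
  obtain ⟨ht0, ht1⟩ := t.2
  set u : ℝ := (1 - (t : ℝ)) * a + (t : ℝ) * b with hu
  have hau : a ≤ u := by nlinarith
  have hub : u ≤ b := by nlinarith
  have humem : u ∈ Set.Icc (0 : ℝ) 1 := ⟨le_trans h0 hau, le_trans hub hb1⟩
  exact ⟨⟨u, humem⟩, hau, hub, γ.extend_apply humem⟩

end SubPath

variable {V : Type} [Fintype V] [DecidableEq V] (X : SComplex V)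

/-- The star of a vertex. -/
def StarA (u : V) : Set (V → ℝ) := {f | f ∈ X.realization ∧ f u ≠ 0}

lemma StarA_sub (u : V) : StarA X u ⊆ X.realization := fun _ h => h.1

lemma vert_mem_StarA (u : V) : vertFun u ∈ StarA X u :=
  ⟨vertFun_mem X u, by rw [vertFun_self]; norm_num⟩

lemma StarA_comb (u : V) :
    ∀ f ∈ StarA X u, ∀ t : ℝ, 0 ≤ t → t ≤ 1 → (1 - t) • f + t • vertFun u ∈ StarA X u := by
  intro f hf t h0 h1
  obtain ⟨s, hs, hsupp⟩ := hf.1.2.2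
  have hu : u ∈ s := hsupp u hf.2
  refine ⟨(comb_mem X hs hf.1 (vertFun_mem X u) hsupp (vert_supp_sub hu) h0 h1).1, ?_⟩
  have hfu : 0 < f u := lt_of_le_of_ne (hf.1.1 u) (Ne.symm hf.2)
  show (1 - t) * f u + t * vertFun u u ≠ 0
  rw [vertFun_self]
  rcases eq_or_lt_of_le h0 with rfl | ht
  · simpa using hf.2
  · have h2 : 0 ≤ (1 - t) * f u := mul_nonneg (by linarith) hfu.le
    positivity

/-- The canonical straight path from a point to a vertex of its supporting face. -/
def toVert (z : ↥X.realization) (u : V) (hz : ((z : ↥X.realization) : V → ℝ) u ≠ 0) :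
    Path z (vertPt X u) :=
  straightPath X z (vertPt X u) (by
    obtain ⟨s, hs, hsupp⟩ := z.2.2.2
    exact straight_mem_of_face X hs hsupp (vert_supp_sub (hsupp u hz)))

lemma toVert_mem_StarA (z : ↥X.realization) (u : V) (hz) (t : unitInterval) :
    ((toVert X z u hz t : ↥X.realization) : V → ℝ) ∈ StarA X u := by
  show ((straightPath X z (vertPt X u) _ t : ↥X.realization) : V → ℝ) ∈ _
  rw [straightPath_apply]
  exact StarA_comb X u (z : V → ℝ) ⟨z.2, hz⟩ t t.2.1 t.2.2

lemma glue {u x y : V} (w : X.graph.Walk u x) {s : Finset V} (hs : s ∈ X.faces)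
    (hx : x ∈ s) (hy : y ∈ s) (hmem) :
    ∃ w' : X.graph.Walk u y,
      (∀ z ∈ w'.support, z ∈ w.support ∨ z = y) ∧
      FGm X (wpath X w') = FGm X (wpath X w)
        ≫ FGm X (straightPath X (vertPt X x) (vertPt X y) hmem) := by
  by_cases hxy : x = y
  · subst hxy
    refine ⟨w, fun z hz => Or.inl hz, ?_⟩
    rw [straightPath_self, FGm_refl, Category.comp_id]
  · have hpair : ({x, y} : Finset V) ∈ X.faces := by
      apply X.down_closed s hs
      · intro z hz
        rcases Finset.mem_insert.mp hz with rfl | hz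
        · exact hx
        · rw [Finset.mem_singleton] at hz; subst hz; exact hy
      · exact ⟨x, Finset.mem_insert_self x {y}⟩
    have adj : X.graph.Adj x y := (⟨hxy, hpair⟩ : x ≠ y ∧ ({x, y} : Finset V) ∈ X.faces)
    refine ⟨w.concat adj, ?_, ?_⟩
    · intro z hz
      rw [SimpleGraph.Walk.support_concat] at hz
      rcases List.mem_append.mp hz with hz | hz
      · exact Or.inl hz
      · exact Or.inr (List.mem_singleton.mp hz)
    · rw [wpath_concat]
      rfl


end SCProof

open SCProof CategoryTheory

/-- **Lemma (topologically essential implies combinatorially essential).**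
If a connected `n`-dimensional simplicial complex `X` is `n`-essential as a topological
space — equivalently (Lemma A.1), its realization cannot be covered by `n` or fewer
inessential open sets — then `X` is combinatorially `n`-essential. -/
theorem combEssential_of_topEssential {V : Type} [Fintype V] [DecidableEq V]
    (X : SComplex V) (n : ℕ) (hn : 1 ≤ n)
    (hconn : X.graph.Connected)
    (hdim : ∀ s ∈ X.faces, s.card ≤ n + 1)
    (hess : ¬ ∃ U : Fin n → Set ↥X.realization,
      (∀ i, IsOpen (U i)) ∧ (∀ z, ∃ i, z ∈ U i) ∧ ∀ i, TopInessential (U i)) :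
    X.CombEssential n := by
  rintro ⟨P, hcov, _hdisj, hiness⟩
  apply hess
  classical
  refine ⟨fun i => {z : ↥X.realization | ∃ v ∈ P i, ((z : ↥X.realization) : V → ℝ) v ≠ 0},
    ?_, ?_, ?_⟩
  · -- openness
    intro i
    show IsOpen {z : ↥X.realization | ∃ v ∈ P i, ((z : ↥X.realization) : V → ℝ) v ≠ 0}
    have hrw : {z : ↥X.realization | ∃ v ∈ P i, ((z : ↥X.realization) : V → ℝ) v ≠ 0}
        = ⋃ v ∈ P i, {z : ↥X.realization | ((z : ↥X.realization) : V → ℝ) v ≠ 0} := by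
      ext z; simp
    rw [hrw]
    refine isOpen_biUnion fun v _ => ?_
    exact isClosed_singleton.isOpen_compl.preimage
      ((continuous_apply v).comp continuous_subtype_val)
  · -- covering
    intro z
    have h1 : ∑ v, ((z : ↥X.realization) : V → ℝ) v = 1 := z.2.2.1
    have h2 : ∃ v, ((z : ↥X.realization) : V → ℝ) v ≠ 0 := by
      by_contra h
      push_neg at h
      rw [Finset.sum_eq_zero (fun v _ => h v)] at h1
      norm_num at h1
    obtain ⟨v, hv⟩ := h2
    obtain ⟨i, hi⟩ := hcov v
    exact ⟨i, v, hi, hv⟩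
  · -- each part is topologically inessential
    intro i y γ hγ
    -- Lebesgue number subdivision
    set c : {v : V // v ∈ P i} → Set unitInterval :=
      fun j => ⇑γ ⁻¹' {z : ↥X.realization | ((z : ↥X.realization) : V → ℝ) j.1 ≠ 0} with hcdef
    have hc₁ : ∀ j, IsOpen (c j) := by
      intro j
      apply IsOpen.preimage γ.continuous
      exact isClosed_singleton.isOpen_compl.preimage
        ((continuous_apply j.1).comp continuous_subtype_val)
    have hc₂ : (Set.univ : Set unitInterval) ⊆ ⋃ j, c j := by
      intro t _
      obtain ⟨v, hvP, hv⟩ := hγ (Set.mem_range_self t)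
      exact Set.mem_iUnion.mpr ⟨⟨v, hvP⟩, hv⟩
    obtain ⟨δ, hδ, hball⟩ := lebesgue_number_lemma_of_metric isCompact_univ hc₁ hc₂
    obtain ⟨m', hm'⟩ := exists_nat_one_div_lt hδ
    obtain ⟨m, hmdef⟩ : ∃ m : ℕ, m = m' + 1 := ⟨m' + 1, rfl⟩
    have hm0' : 0 < m := by omega
    have hm0 : (0 : ℝ) < m := by positivity
    have h1m : (1 : ℝ) ≤ m := by exact_mod_cast hm0'
    have hmδ : 1 / (m : ℝ) < δ := by rw [hmdef]; push_cast; exact hm'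
    -- choose a star vertex for each subdivision interval
    have hNV : ∃ v₀ : V, True := by
      have h1 : ∑ v, ((y : ↥X.realization) : V → ℝ) v = 1 := y.2.2.1
      by_contra h
      push_neg at h
      rw [Finset.sum_eq_zero (fun v _ => (h v).elim)] at h1
      norm_num at h1
    obtain ⟨v₀, -⟩ := hNV
    have hchoice : ∀ k : ℕ, ∃ v : V, k < m →
        (v ∈ P i ∧ ∀ t : unitInterval, (k : ℝ) / m ≤ (t : ℝ) → (t : ℝ) ≤ ((k : ℝ) + 1) / m →
          ((γ t : ↥X.realization) : V → ℝ) v ≠ 0) := by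
      intro k
      by_cases hk : k < m
      · have hkm : (k : ℝ) / m ∈ Set.Icc (0 : ℝ) 1 := by
          constructor
          · positivity
          · rw [div_le_one hm0]
            exact_mod_cast le_of_lt hk
        obtain ⟨j, hj⟩ := hball (Set.projIcc 0 1 zero_le_one ((k : ℝ) / m)) (Set.mem_univ _)
        refine ⟨j.1, fun _ => ⟨j.2, fun t ht1 ht2 => ?_⟩⟩
        apply hj
        rw [Metric.mem_ball, Subtype.dist_eq, Real.dist_eq,
          Set.projIcc_of_mem zero_le_one hkm]
        have hinv : (0 : ℝ) ≤ 1 / m := by positivity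
        have habs : |(t : ℝ) - (k : ℝ) / m| ≤ 1 / m := by
          rw [abs_le]
          have hsum : ((k : ℝ) + 1) / m = (k : ℝ) / m + 1 / m := by ring
          constructor
          · linarith
          · linarith [ht2, hsum ▸ ht2]
        linarith
      · exact ⟨v₀, fun hf => absurd hf hk⟩
    choose vv hvv using hchoice
    have hP : ∀ k, k < m → vv k ∈ P i := fun k hk => (hvv k hk).1
    have hJ : ∀ k, k < m → ∀ t : unitInterval, (k : ℝ) / m ≤ (t : ℝ) →
        (t : ℝ) ≤ ((k : ℝ) + 1) / m →
        ((γ t : ↥X.realization) : V → ℝ) (vv k) ≠ 0 := fun k hk => (hvv k hk).2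
    -- basic endpoint facts
    have hy0 : γ.extend 0 = y := γ.extend_zero
    have h₀ : ((γ.extend (0 : ℝ) : ↥X.realization) : V → ℝ) (vv 0) ≠ 0 := by
      have h00 : γ.extend (0 : ℝ) = γ ⟨0, by norm_num⟩ :=
        γ.extend_apply (by norm_num : (0 : ℝ) ∈ Set.Icc (0 : ℝ) 1)
      rw [h00]
      apply hJ 0 hm0'
      · norm_num
      · push_cast
        positivity
    -- the main induction over the subdivision
    have main : ∀ k : ℕ, k < m → ∀ r : ℝ, r = ((k : ℝ) + 1) / m →
        ∃ w : X.graph.Walk (vv 0) (vv k), (∀ z ∈ w.support, z ∈ P i) ∧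
          ∀ (hne : ((γ.extend r : ↥X.realization) : V → ℝ) (vv k) ≠ 0),
            FGm X (subPath γ 0 r)
                ≫ FGm X (toVert X (γ.extend r) (vv k) hne)
              = FGm X (toVert X (γ.extend 0) (vv 0) h₀) ≫ FGm X (wpath X w) := by
      intro k
      induction k with
      | zero =>
        intro hk r hr
        have h2 : r = 1 / (m : ℝ) := by rw [hr]; norm_num
        subst h2
        refine ⟨.nil, ?_, ?_⟩
        · intro z hz
          rw [SimpleGraph.Walk.support_nil, List.mem_singleton] at hz
          subst hz
          exact hP 0 hk
        · intro hne
          rw [wpath_nil, FGm_refl, Category.comp_id, ← FGm_trans]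
          apply FGm_eq_of_homotopic
          have hcz : (((0 : ℕ) : ℝ) + 1) / m = 1 / m := by norm_num
          have h01 : (0 : ℝ) ≤ 1 / (m : ℝ) := by positivity
          have h11 : 1 / (m : ℝ) ≤ 1 := by rw [div_le_one hm0]; exact h1m
          apply starHomotopic X (StarA X (vv 0)) (StarA_sub X _) (vertFun (vv 0))
            (vert_mem_StarA X _) (StarA_comb X _)
          · apply forall_trans_mem X
            · intro t
              obtain ⟨u, hu1, hu2, hequ⟩ := subPath_exists_eq γ le_rfl h01 h11 t
              rw [hequ]
              refine ⟨(γ u).2, ?_⟩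
              apply hJ 0 hk u
              · have hz0 : ((0 : ℕ) : ℝ) / m = 0 := by norm_num
                linarith
              · have := hcz
                linarith
            · exact toVert_mem_StarA X _ _ _
          · exact toVert_mem_StarA X _ _ _
      | succ k ih =>
        intro hk1 r hr
        have h2 : r = ((k : ℝ) + 1 + 1) / m := by rw [hr]; push_cast; ring
        subst h2
        have hkm : k < m := Nat.lt_of_succ_lt hk1
        obtain ⟨w, hws, hw⟩ := ih hkm (((k : ℝ) + 1) / m) rfl
        -- real number bookkeeping
        have hk1m : ((k : ℝ) + 1) ≤ m := by exact_mod_cast hk1.le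
        have hk2m : ((k : ℝ) + 1 + 1) ≤ m := by exact_mod_cast hk1
        have hA0 : (0 : ℝ) ≤ ((k : ℝ) + 1) / m := by positivity
        have hAB : ((k : ℝ) + 1) / m ≤ ((k : ℝ) + 1 + 1) / m := by
          gcongr
          linarith
        have hB1 : ((k : ℝ) + 1 + 1) / m ≤ 1 := by rw [div_le_one hm0]; exact hk2m
        have hA1 : ((k : ℝ) + 1) / m ≤ 1 := by rw [div_le_one hm0]; exact hk1m
        -- cast-normalized interval facts
        have hJ1 := hJ (k + 1) hk1
        simp only [Nat.cast_succ] at hJ1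
        -- membership of the subdivision points
        have hextA : γ.extend (((k : ℝ) + 1) / m)
            = γ ⟨((k : ℝ) + 1) / m, ⟨hA0, hA1⟩⟩ := γ.extend_apply ⟨hA0, hA1⟩
        have hextB : γ.extend (((k : ℝ) + 1 + 1) / m)
            = γ ⟨((k : ℝ) + 1 + 1) / m, ⟨by positivity, hB1⟩⟩ :=
          γ.extend_apply ⟨by positivity, hB1⟩
        have h_A0 : ((γ.extend (((k : ℝ) + 1) / m) : ↥X.realization) : V → ℝ) (vv k) ≠ 0 := by
          rw [hextA]
          apply hJ k hkm
          · show (k : ℝ) / m ≤ ((k : ℝ) + 1) / m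
            gcongr
            linarith
          · show ((k : ℝ) + 1) / m ≤ ((k : ℝ) + 1) / m
            exact le_refl _
        have h_A1 : ((γ.extend (((k : ℝ) + 1) / m) : ↥X.realization) : V → ℝ)
            (vv (k + 1)) ≠ 0 := by
          rw [hextA]
          apply hJ1
          · show ((k : ℝ) + 1) / m ≤ ((k : ℝ) + 1) / m
            exact le_refl _
          · show ((k : ℝ) + 1) / m ≤ ((k : ℝ) + 1 + 1) / m
            exact hAB
        have h_B1 : ((γ.extend (((k : ℝ) + 1 + 1) / m) : ↥X.realization) : V → ℝ)
            (vv (k + 1)) ≠ 0 := by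
          rw [hextB]
          apply hJ1
          · show ((k : ℝ) + 1) / m ≤ ((k : ℝ) + 1 + 1) / m
            exact hAB
          · show ((k : ℝ) + 1 + 1) / m ≤ ((k : ℝ) + 1 + 1) / m
            exact le_refl _
        -- the supporting face at the split point
        obtain ⟨s, hs, hsupp⟩ := (γ.extend (((k : ℝ) + 1) / m) : ↥X.realization).2.2.2
        have hxk : vv k ∈ s := hsupp _ h_A0
        have hxk1 : vv (k + 1) ∈ s := hsupp _ h_A1
        -- SPLIT
        have hsplit : FGm X (subPath γ 0 (((k : ℝ) + 1 + 1) / m))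
            = FGm X (subPath γ 0 (((k : ℝ) + 1) / m))
              ≫ FGm X (subPath γ (((k : ℝ) + 1) / m) (((k : ℝ) + 1 + 1) / m)) := by
          rw [← FGm_trans]
          exact (FGm_eq_of_homotopic X (subPath_trans_homotopic γ hA0 hAB)).symm
        -- STAR2: absorb the new piece into the straight path to the new vertex
        have hstar2 : FGm X (subPath γ (((k : ℝ) + 1) / m) (((k : ℝ) + 1 + 1) / m))
              ≫ FGm X (toVert X (γ.extend (((k : ℝ) + 1 + 1) / m)) (vv (k + 1)) h_B1)
            = FGm X (toVert X (γ.extend (((k : ℝ) + 1) / m)) (vv (k + 1)) h_A1) := by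
          rw [← FGm_trans]
          apply FGm_eq_of_homotopic
          apply starHomotopic X (StarA X (vv (k + 1))) (StarA_sub X _) (vertFun (vv (k + 1)))
            (vert_mem_StarA X _) (StarA_comb X _)
          · apply forall_trans_mem X
            · intro t
              obtain ⟨u, hu1, hu2, hequ⟩ := subPath_exists_eq γ hA0 hAB hB1 t
              rw [hequ]
              exact ⟨(γ u).2, hJ1 u hu1 hu2⟩
            · exact toVert_mem_StarA X _ _ _
          · exact toVert_mem_StarA X _ _ _
        -- STAR3: switch the straight path to factor through the previous vertex
        have hstar3 : FGm X (toVert X (γ.extend (((k : ℝ) + 1) / m)) (vv (k + 1)) h_A1)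
            = FGm X (toVert X (γ.extend (((k : ℝ) + 1) / m)) (vv k) h_A0)
              ≫ FGm X (straightPath X (vertPt X (vv k)) (vertPt X (vv (k + 1)))
                (straight_mem_of_face X hs (vertPt_supp X hxk) (vertPt_supp X hxk1))) := by
          rw [← FGm_trans]
          apply FGm_eq_of_homotopic
          apply Path.Homotopic.symm
          apply starHomotopic X (Aset X s) (Aset_sub X _) (vertFun (vv k))
            (vert_mem_Aset X hxk) (Aset_comb X hs hxk)
          · apply forall_trans_mem X
            · exact straight_in_Aset X hs hsupp (vertPt_supp X hxk) _
            · exact straight_in_Aset X hs (vertPt_supp X hxk) (vertPt_supp X hxk1) _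
          · exact straight_in_Aset X hs hsupp (vertPt_supp X hxk1) _
        -- glue
        obtain ⟨w', hw's, hglue⟩ := glue X w hs hxk hxk1
          (straight_mem_of_face X hs (vertPt_supp X hxk) (vertPt_supp X hxk1))
        refine ⟨w', ?_, ?_⟩
        · intro z hz
          rcases hw's z hz with hz | rfl
          · exact hws z hz
          · exact hP (k + 1) hk1
        · intro hne
          calc FGm X (subPath γ 0 (((k : ℝ) + 1 + 1) / m))
              ≫ FGm X (toVert X (γ.extend (((k : ℝ) + 1 + 1) / m)) (vv (k + 1)) hne)
              = FGm X (subPath γ 0 (((k : ℝ) + 1) / m))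
                ≫ (FGm X (subPath γ (((k : ℝ) + 1) / m) (((k : ℝ) + 1 + 1) / m))
                  ≫ FGm X (toVert X (γ.extend (((k : ℝ) + 1 + 1) / m)) (vv (k + 1)) h_B1)) := by
                rw [hsplit, Category.assoc]
            _ = FGm X (subPath γ 0 (((k : ℝ) + 1) / m))
                ≫ FGm X (toVert X (γ.extend (((k : ℝ) + 1) / m)) (vv (k + 1)) h_A1) := by
                rw [hstar2]
            _ = (FGm X (subPath γ 0 (((k : ℝ) + 1) / m))
                ≫ FGm X (toVert X (γ.extend (((k : ℝ) + 1) / m)) (vv k) h_A0))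
                ≫ FGm X (straightPath X (vertPt X (vv k)) (vertPt X (vv (k + 1)))
                  (straight_mem_of_face X hs (vertPt_supp X hxk) (vertPt_supp X hxk1))) := by
                rw [hstar3, Category.assoc]
            _ = (FGm X (toVert X (γ.extend 0) (vv 0) h₀) ≫ FGm X (wpath X w))
                ≫ FGm X (straightPath X (vertPt X (vv k)) (vertPt X (vv (k + 1)))
                  (straight_mem_of_face X hs (vertPt_supp X hxk) (vertPt_supp X hxk1))) := by
                rw [hw h_A0]
            _ = FGm X (toVert X (γ.extend 0) (vv 0) h₀) ≫ FGm X (wpath X w') := by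
                rw [Category.assoc, ← hglue]
    -- apply the induction at the last interval
    have hm'm : m' < m := by omega
    obtain ⟨w, hws, hw⟩ := main m' hm'm (((m' : ℝ) + 1) / m) rfl
    have hm1 : ((m' : ℝ) + 1) / m = 1 := by
      rw [hmdef]
      push_cast
      field_simp
    have hz1 : γ.extend (((m' : ℝ) + 1) / m) = y := by rw [hm1, Path.extend_one]
    have h_end : ((γ.extend (((m' : ℝ) + 1) / m) : ↥X.realization) : V → ℝ) (vv m') ≠ 0 := by
      have hmem : ((m' : ℝ) + 1) / m ∈ Set.Icc (0 : ℝ) 1 := ⟨by positivity, by rw [hm1]⟩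
      rw [γ.extend_apply hmem]
      apply hJ m' hm'm
      · show (m' : ℝ) / m ≤ ((m' : ℝ) + 1) / m
        gcongr
        linarith
      · exact le_refl _
    -- close up the walk
    obtain ⟨s, hs, hsupp⟩ := (γ.extend (((m' : ℝ) + 1) / m) : ↥X.realization).2.2.2
    have hy_k : vv m' ∈ s := hsupp _ h_end
    have hz1y0 : γ.extend (((m' : ℝ) + 1) / m) = γ.extend (0 : ℝ) := by rw [hz1, hy0]
    have hsupp0 : ∀ w, ((γ.extend (0 : ℝ) : ↥X.realization) : V → ℝ) w ≠ 0 → w ∈ s := by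
      intro w hw
      apply hsupp
      rw [hz1y0]
      exact hw
    have hy_0 : vv 0 ∈ s := hsupp0 _ h₀
    obtain ⟨cw, hcs, hcglue⟩ := glue X w hs hy_k hy_0
      (straight_mem_of_face X hs (vertPt_supp X hy_k) (vertPt_supp X hy_0))
    have hnull : X.NullHomotopic cw := by
      apply hiness i (vv 0) cw
      intro z hz
      rcases hcs z hz with hz | rfl
      · exact hws z hz
      · exact hP 0 hm0'
    have hRc : FGm X (wpath X cw) = 𝟙 (FGo X (vertPt X (vv 0))) := by
      rw [wpath_eq_of_edgeHomotopic X hnull, wpath_nil, FGm_refl]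
    have hclose : FGm X (wpath X w)
        ≫ FGm X (straightPath X (vertPt X (vv m')) (vertPt X (vv 0))
          (straight_mem_of_face X hs (vertPt_supp X hy_k) (vertPt_supp X hy_0))) = 𝟙 _ := by
      rw [← hcglue, hRc]
    have E1 : FGm X (subPath γ 0 (((m' : ℝ) + 1) / m))
        ≫ (FGm X (toVert X (γ.extend (((m' : ℝ) + 1) / m)) (vv m') h_end)
          ≫ FGm X (straightPath X (vertPt X (vv m')) (vertPt X (vv 0))
            (straight_mem_of_face X hs (vertPt_supp X hy_k) (vertPt_supp X hy_0))))
        = FGm X (toVert X (γ.extend 0) (vv 0) h₀) := by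
      rw [← Category.assoc, hw h_end, Category.assoc, hclose, Category.comp_id]
    -- the trivial path
    have hr0mem : ∀ t : ℝ, 0 ≤ t → t ≤ 1 →
        ((1 - t) • ((γ.extend (0 : ℝ) : ↥X.realization) : V → ℝ)
          + t • ((γ.extend (((m' : ℝ) + 1) / m) : ↥X.realization) : V → ℝ))
          ∈ X.realization :=
      straight_mem_of_face X hs hsupp0 hsupp
    have E2 : FGm X (straightPath X (γ.extend 0) (γ.extend (((m' : ℝ) + 1) / m)) hr0mem)
        ≫ (FGm X (toVert X (γ.extend (((m' : ℝ) + 1) / m)) (vv m') h_end)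
          ≫ FGm X (straightPath X (vertPt X (vv m')) (vertPt X (vv 0))
            (straight_mem_of_face X hs (vertPt_supp X hy_k) (vertPt_supp X hy_0))))
        = FGm X (toVert X (γ.extend 0) (vv 0) h₀) := by
      rw [← FGm_trans, ← FGm_trans]
      apply FGm_eq_of_homotopic
      apply starHomotopic X (Aset X s) (Aset_sub X _) (vertFun (vv 0))
        (vert_mem_Aset X hy_0) (Aset_comb X hs hy_0)
      · apply forall_trans_mem X
        · exact straight_in_Aset X hs hsupp0 hsupp _
        · apply forall_trans_mem X
          · exact straight_in_Aset X hs hsupp (vertPt_supp X hy_k) _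
          · exact straight_in_Aset X hs (vertPt_supp X hy_k) (vertPt_supp X hy_0) _
      · exact straight_in_Aset X hs hsupp0 (vertPt_supp X hy_0) _
    have hcancel : FGm X (subPath γ 0 (((m' : ℝ) + 1) / m))
        = FGm X (straightPath X (γ.extend 0) (γ.extend (((m' : ℝ) + 1) / m)) hr0mem) := by
      rw [← cancel_mono (FGm X (toVert X (γ.extend (((m' : ℝ) + 1) / m)) (vv m') h_end)
        ≫ FGm X (straightPath X (vertPt X (vv m')) (vertPt X (vv 0))
          (straight_mem_of_face X hs (vertPt_supp X hy_k) (vertPt_supp X hy_0))))]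
      rw [E1, E2]
    have hfinal := homotopic_of_FGm_eq X hcancel
    -- transfer to the original loop
    apply homotopic_transfer hy0 hz1 ?_ ?_ hfinal
    · intro t
      show γ.extend ((1 - (t : ℝ)) * 0 + (t : ℝ) * (((m' : ℝ) + 1) / m)) = γ t
      rw [show (1 - (t : ℝ)) * 0 + (t : ℝ) * (((m' : ℝ) + 1) / m) = (t : ℝ) by
        rw [hm1]; ring]
      exact γ.extend_extends' t
    · intro t
      apply Subtype.ext
      show (1 - (t : ℝ)) • ((γ.extend (0 : ℝ) : ↥X.realization) : V → ℝ)
          + (t : ℝ) • ((γ.extend (((m' : ℝ) + 1) / m) : ↥X.realization) : V → ℝ)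
        = ((y : ↥X.realization) : V → ℝ)
      rw [hy0, hz1, ← add_smul]
      simp
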